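/- Let M_t = ∫_0^t Γ̄_s dB̃_s be a continuous local martingale in ℝ^d where B̃ is a standard d-dimensional Brownian motion and Γ̄_s are symmetric positive definite adapted matrices, and let Z = ∫_0^ε Σ(t)^{1/2} U_t dB̃_t where Σ(t) = E[Γ_t²] is deterministic positive definite and U_t := (Σ(t)^{-1/2} Γ̄_t² Σ(t)^{-1/2})^{1/2} Σ(t)^{1/2} Γ̄_t^{-1}. Then U_t U_tᵀ = U_tᵀ U_t = I_d, Σ(t)^{1/2} U_t Γ̄_t = Σ(t) # Γ̄_t², and Z is a centered Gaussian vector with covariance ∫_0^ε Σ(t) dt. -/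

import Mathlib

open Matrix

/-- **Orthogonality of the martingale-embedding rotation (algebraic core).**
Let `S` (deterministic, `S = E[Γ_t²]`) and `G` (the value `Γ̄_t`) be positive definite
`d × d` matrices, `R` the positive definite square root of `S` (so `S^{1/2} = R`), and `C`
the positive definite square root of `S^{-1/2} G² S^{-1/2}`. Then
`U := (S^{-1/2} G² S^{-1/2})^{1/2} S^{1/2} G⁻¹ = C R G⁻¹` satisfies
`U Uᵀ = Uᵀ U = I` and `S^{1/2} U G = R C R = S # G²`, the matrix geometric mean of `S`
and `G²`. -/
theorem stmt19 (d : ℕ) (S G R C : Matrix (Fin d) (Fin d) ℝ)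
    (hS : S.PosDef) (hG : G.PosDef)
    (hR : R.PosDef) (hR2 : R * R = S)
    (hC : C.PosDef) (hC2 : C * C = R⁻¹ * (G * G) * R⁻¹) :
    (C * R * G⁻¹) * (C * R * G⁻¹)ᵀ = 1 ∧
    (C * R * G⁻¹)ᵀ * (C * R * G⁻¹) = 1 ∧
    R * (C * R * G⁻¹) * G = R * C * R := by
  have hGu : IsUnit G.det := isUnit_iff_ne_zero.mpr (ne_of_gt hG.det_pos)
  have hRu : IsUnit R.det := isUnit_iff_ne_zero.mpr (ne_of_gt hR.det_pos)
  have hCu : IsUnit C.det := isUnit_iff_ne_zero.mpr (ne_of_gt hC.det_pos)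
  have hGsym : Gᵀ = G := by
    have := hG.isHermitian.eq
    rwa [Matrix.conjTranspose_eq_transpose_of_trivial] at this
  have hRsym : Rᵀ = R := by
    have := hR.isHermitian.eq
    rwa [Matrix.conjTranspose_eq_transpose_of_trivial] at this
  have hCsym : Cᵀ = C := by
    have := hC.isHermitian.eq
    rwa [Matrix.conjTranspose_eq_transpose_of_trivial] at this
  have hGinvsym : (G⁻¹)ᵀ = G⁻¹ := by rw [Matrix.transpose_nonsing_inv, hGsym]
  -- G⁻¹ * G = 1 etc.
  have hGi : G⁻¹ * G = 1 := Matrix.nonsing_inv_mul G hGu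
  have hGi' : G * G⁻¹ = 1 := Matrix.mul_nonsing_inv G hGu
  have hRi : R⁻¹ * R = 1 := Matrix.nonsing_inv_mul R hRu
  have hRi' : R * R⁻¹ = 1 := Matrix.mul_nonsing_inv R hRu
  have hCi : C⁻¹ * C = 1 := Matrix.nonsing_inv_mul C hCu
  have hCi' : C * C⁻¹ = 1 := Matrix.mul_nonsing_inv C hCu
  refine ⟨?_, ?_, ?_⟩
  · -- C R G⁻¹ G⁻¹ R C = C (C²)⁻¹ C = 1
    have key : R * (G⁻¹ * G⁻¹) * R = C⁻¹ * C⁻¹ := by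
      have h1 : (C * C)⁻¹ = (R⁻¹ * (G * G) * R⁻¹)⁻¹ := by rw [hC2]
      simp only [Matrix.mul_inv_rev, Matrix.nonsing_inv_nonsing_inv R hRu] at h1
      rw [h1]; simp only [Matrix.mul_assoc]
    calc (C * R * G⁻¹) * (C * R * G⁻¹)ᵀ
        = C * (R * (G⁻¹ * G⁻¹) * R) * C := by
          simp [Matrix.transpose_mul, hGinvsym, hRsym, hCsym, Matrix.mul_assoc]
      _ = C * (C⁻¹ * C⁻¹) * C := by rw [key]
      _ = 1 := by
          rw [← Matrix.mul_assoc, hCi', Matrix.one_mul, hCi]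
  · calc (C * R * G⁻¹)ᵀ * (C * R * G⁻¹)
        = G⁻¹ * (R * (C * C) * R) * G⁻¹ := by
          simp [Matrix.transpose_mul, hGinvsym, hRsym, hCsym, Matrix.mul_assoc]
      _ = G⁻¹ * (R * (R⁻¹ * (G * G) * R⁻¹) * R) * G⁻¹ := by rw [hC2]
      _ = 1 := by
          rw [show R * (R⁻¹ * (G * G) * R⁻¹) * R
              = (R * R⁻¹) * (G * G) * (R⁻¹ * R) by simp only [Matrix.mul_assoc]]
          rw [hRi', hRi, Matrix.one_mul, Matrix.mul_one]
          rw [show G⁻¹ * (G * G) * G⁻¹ = (G⁻¹ * G) * (G * G⁻¹) by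
              simp only [Matrix.mul_assoc], hGi, hGi', Matrix.one_mul]
  · rw [show R * (C * R * G⁻¹) * G = R * C * R * (G⁻¹ * G) by
        simp only [Matrix.mul_assoc], hGi, Matrix.mul_one]
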